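/- Let γ be a permutation of ℤ that is the translation x ↦ x + 1, and let τ, τ' be transpositions of ℤ. If τ' = γ^{-m} τ γ^m for some integer m, then τ and τ' are twisted-conjugate in FSym(ℤ) with respect to the automorphism μ(γ): h ↦ γ⁻¹hγ. -/

import Mathlib

private lemma gamma_inv_apply (γ : Equiv.Perm ℤ) (hγ : ∀ x : ℤ, γ x = x + 1) :
    ∀ x : ℤ, γ⁻¹ x = x - 1 := by
  intro x
  have h1 : γ (x - 1) = x := by rw [hγ]; ring
  conv_lhs => rw [← h1]
  rw [← Equiv.Perm.mul_apply, inv_mul_cancel, Equiv.Perm.one_apply]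

private lemma gamma_zpow_apply (γ : Equiv.Perm ℤ) (hγ : ∀ x : ℤ, γ x = x + 1) :
    ∀ k : ℤ, ∀ x : ℤ, (γ ^ k) x = x + k := by
  intro k
  induction k using Int.induction_on with
  | zero => intro x; simp
  | succ k ih =>
      intro x
      rw [zpow_add_one, Equiv.Perm.mul_apply, hγ, ih]
      ring
  | pred k ih =>
      intro x
      rw [zpow_sub_one, Equiv.Perm.mul_apply, gamma_inv_apply γ hγ, ih]
      ring

private lemma pow_gt_apply (γ : Equiv.Perm ℤ) (hγ : ∀ x : ℤ, γ x = x + 1)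
    (a b : ℤ) :
    ∀ n : ℕ, ∀ x : ℤ, (∀ j : ℕ, j < n → (x + j ≠ a ∧ x + j ≠ b)) →
      ((γ * Equiv.swap a b) ^ n) x = x + n := by
  intro n
  induction n with
  | zero => intro x _; simp
  | succ n ih =>
      intro x hx
      have h0 := hx 0 (Nat.succ_pos n)
      rw [pow_succ, Equiv.Perm.mul_apply, Equiv.Perm.mul_apply,
        Equiv.swap_apply_of_ne_of_ne (by simpa using h0.1) (by simpa using h0.2), hγ,
        ih (x + 1) (by
          intro j hj
          have := hx (j + 1) (by omega)
          constructor <;> push_cast at this ⊢ <;> omega)]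
      push_cast; ring

private lemma pow_lt_apply (γ : Equiv.Perm ℤ) (hγ : ∀ x : ℤ, γ x = x + 1)
    (a b : ℤ) :
    ∀ n : ℕ, ∀ x : ℤ, (∀ j : ℕ, j < n → (x - j - 1 ≠ a ∧ x - j - 1 ≠ b)) →
      ((Equiv.swap a b * γ⁻¹) ^ n) x = x - n := by
  intro n
  induction n with
  | zero => intro x _; simp
  | succ n ih =>
      intro x hx
      have h0 := hx 0 (Nat.succ_pos n)
      rw [pow_succ, Equiv.Perm.mul_apply, Equiv.Perm.mul_apply, gamma_inv_apply γ hγ,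
        Equiv.swap_apply_of_ne_of_ne (by simpa using h0.1) (by simpa using h0.2),
        ih (x - 1) (by
          intro j hj
          have := hx (j + 1) (by omega)
          constructor <;> push_cast at this ⊢ <;> omega)]
      push_cast; ring

theorem shifted_transpositions_twisted_conjugate (γ : Equiv.Perm ℤ)
    (hγ : ∀ x : ℤ, γ x = x + 1) (τ τ' : Equiv.Perm ℤ)
    (hτ : τ.IsSwap) (hτ' : τ'.IsSwap)
    (hconj : ∃ m : ℤ, τ' = (γ ^ m)⁻¹ * τ * γ ^ m) :
    ∃ h : Equiv.Perm ℤ, {x | h x ≠ x}.Finite ∧ τ' = h * τ * (γ⁻¹ * h * γ)⁻¹ := by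
  obtain ⟨m, hm⟩ := hconj
  obtain ⟨a, b, hab, hτab⟩ := hτ
  refine ⟨γ ^ (-m) * (τ * γ⁻¹) ^ (-m), ?_, ?_⟩
  · -- finite support
    apply Set.Finite.subset (Set.finite_Icc (min a b - (|m| + 1)) (max a b + (|m| + 1)))
    intro x hx
    simp only [Set.mem_setOf_eq] at hx
    by_contra hxi
    apply hx
    have hout : x < min a b - (|m| + 1) ∨ max a b + (|m| + 1) < x := by
      rcases Set.mem_Icc.not.mp hxi with h
      omega
    rw [Equiv.Perm.mul_apply]
    rcases le_or_gt m 0 with hm0 | hm0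
    · -- -m ≥ 0
      have habs : |m| = -m := abs_of_nonpos hm0
      set n : ℕ := (-m).toNat with hn
      have hcast : ((n : ℤ)) = -m := Int.toNat_of_nonneg (by omega)
      have hpow : (τ * γ⁻¹) ^ (-m) = (τ * γ⁻¹) ^ n := by
        rw [← hcast, zpow_natCast]
      rw [hpow, hτab, pow_lt_apply γ hγ a b n x (by
        intro j hj
        have hj' : (j : ℤ) < (n : ℤ) := by exact_mod_cast hj
        constructor <;> omega)]
      rw [gamma_zpow_apply γ hγ]
      omega
    · -- -m < 0
      have habs : |m| = m := abs_of_pos hm0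
      set n : ℕ := m.toNat with hn
      have hcast : ((n : ℤ)) = m := Int.toNat_of_nonneg (by omega)
      have hinv : (τ * γ⁻¹)⁻¹ = γ * τ := by
        rw [hτab, mul_inv_rev, inv_inv, Equiv.swap_inv]
      have hpow : (τ * γ⁻¹) ^ (-m) = (γ * τ) ^ n := by
        rw [← hinv, inv_pow, ← zpow_natCast, ← zpow_neg, hcast]
      rw [hpow, hτab, pow_gt_apply γ hγ a b n x (by
        intro j hj
        have hj' : (j : ℤ) < (n : ℤ) := by exact_mod_cast hj
        constructor <;> omega)]
      rw [gamma_zpow_apply γ hγ]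
      omega
  · -- the twisted conjugacy identity
    obtain ⟨σ, hσ⟩ : ∃ σ, τ * γ⁻¹ = σ := ⟨_, rfl⟩
    have hτσ : τ = σ * γ := by rw [← hσ]; group
    rw [hm, hσ, hτσ]
    group
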